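/- Every lopsp-operation is 2-connected as a map. -/

import Mathlib

/-- The orbit equivalence relation of a permutation: `x ~ y` iff some power of `f` maps `x` to `y`. -/
def permOrbit {D : Type} (f : Equiv.Perm D) : Setoid D where
  r x y := ∃ n : ℤ, (f ^ n) x = y
  iseqv := by
    refine ⟨fun x => ⟨0, by simp⟩, ?_, ?_⟩
    · rintro x y ⟨n, rfl⟩
      exact ⟨-n, by simp [← Equiv.Perm.mul_apply, ← zpow_add]⟩
    · rintro x y z ⟨m, rfl⟩ ⟨n, rfl⟩
      exact ⟨n + m, by simp [← Equiv.Perm.mul_apply, ← zpow_add]⟩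

/-- A combinatorial map: a set `D` of darts (directed edges), a rotation `σ` giving the
cyclic order of darts around each vertex, and a fixed-point-free involution `θ`
matching each dart with its reverse. -/
structure CombMap (D : Type) where
  σ : Equiv.Perm D
  θ : Equiv.Perm D
  θ_invol : ∀ d, θ (θ d) = d
  θ_fixfree : ∀ d, θ d ≠ d

namespace CombMap

variable {D D' : Type} (M : CombMap D)

/-- Vertices are the orbits of `σ`. -/
def Vertices : Type := Quotient (permOrbit M.σ)
/-- Edges are the orbits of `θ`. -/
def Edges : Type := Quotient (permOrbit M.θ)
/-- The face permutation `d ↦ θ (σ d)`. -/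
def facePerm : Equiv.Perm D := M.σ.trans M.θ
/-- Faces are the orbits of the face permutation. -/
def Faces : Type := Quotient (permOrbit M.facePerm)

def vertexOf (d : D) : M.Vertices := Quotient.mk _ d
def edgeOf (d : D) : M.Edges := Quotient.mk _ d
def faceOf (d : D) : M.Faces := Quotient.mk _ d

noncomputable def nV : ℕ := Nat.card M.Vertices
noncomputable def nE : ℕ := Nat.card M.Edges
noncomputable def nF : ℕ := Nat.card M.Faces

/-- The degree of a vertex: the number of darts emanating from it. -/
noncomputable def degree (v : M.Vertices) : ℕ := Nat.card {d : D // M.vertexOf d = v}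
/-- The size of a face: the number of darts in its facial walk. -/
noncomputable def faceSize (f : M.Faces) : ℕ := Nat.card {d : D // M.faceOf d = f}

/-- A map is connected if any dart can be reached from any other by `σ`- and `θ`-steps. -/
def IsConnected : Prop :=
  ∀ d d' : D, Relation.ReflTransGen (fun a b => M.σ a = b ∨ M.θ a = b) d d'

/-- Euler's formula for genus 0: `|V| + |F| = |E| + 2`. -/
def EulerPlane : Prop := M.nV + M.nF = M.nE + 2

/-- A plane map: a connected map of genus 0. -/
def IsPlaneMap : Prop := M.IsConnected ∧ M.EulerPlane

def IsQuadrangulation : Prop := ∀ f : M.Faces, M.faceSize f = 4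
def IsTriangulation : Prop := ∀ f : M.Faces, M.faceSize f = 3

/-- A dart is a loop if both of its ends are at the same vertex. -/
def IsLoop (d : D) : Prop := M.vertexOf d = M.vertexOf (M.θ d)

/-- Two darts are parallel if they belong to distinct edges with the same pair of endpoints. -/
def Parallel (d d' : D) : Prop :=
  M.edgeOf d ≠ M.edgeOf d' ∧ M.vertexOf d = M.vertexOf d' ∧
    M.vertexOf (M.θ d) = M.vertexOf (M.θ d')

/-- A map is simple if it has no loops and no parallel edges. -/
def IsSimple : Prop := (∀ d, ¬ M.IsLoop d) ∧ ∀ d d', ¬ M.Parallel d d'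

/-- A map is bipartite if its vertices can be 2-coloured with no monochromatic edge. -/
def IsBipartite : Prop :=
  ∃ c : M.Vertices → Bool, ∀ d : D, c (M.vertexOf d) ≠ c (M.vertexOf (M.θ d))

/-- Isomorphism of maps: a bijection of darts commuting with the rotation and the reversal. -/
def Iso (M' : CombMap D') : Prop :=
  ∃ e : D ≃ D', (∀ d, e (M.σ d) = M'.σ (e d)) ∧ (∀ d, e (M.θ d) = M'.θ (e d))

end CombMap

/-- A lopsp-operation: a plane (connected, genus 0) triangulation with a proper
3-colouring of its vertices by `{0,1,2}`, three marked vertices `v₀, v₁, v₂` with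
`c v₀, c v₂ ≠ 1`, `deg v₁ = 2` if `c v₁ = 1`, and every other colour-1 vertex of degree 4. -/
structure Lopsp (D : Type) extends CombMap D where
  conn : toCombMap.IsConnected
  euler : toCombMap.EulerPlane
  tri : toCombMap.IsTriangulation
  col : toCombMap.Vertices → Fin 3
  proper : ∀ d : D, col (toCombMap.vertexOf d) ≠ col (toCombMap.vertexOf (θ d))
  v0 : toCombMap.Vertices
  v1 : toCombMap.Vertices
  v2 : toCombMap.Vertices
  hv0 : col v0 ≠ 1
  hv2 : col v2 ≠ 1
  hv1 : col v1 = 1 → toCombMap.degree v1 = 2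
  hdeg : ∀ v, col v = 1 → v ≠ v1 → toCombMap.degree v = 4

namespace Lopsp

variable {D : Type} (O : Lopsp D)

/-- The underlying combinatorial map of a lopsp-operation. -/
abbrev M : CombMap D := O.toCombMap

end Lopsp

namespace CombMap

/-- The map stays connected after removing a vertex `v`: any two darts not at `v` are joined
by a sequence of `σ`- and `θ`-steps through darts not at `v`. -/
def ConnectedAvoiding {D : Type} (M : CombMap D) (v : M.Vertices) : Prop :=
  ∀ d d' : D, M.vertexOf d ≠ v → M.vertexOf d' ≠ v →
    Relation.ReflTransGen
      (fun a b => M.vertexOf a ≠ v ∧ M.vertexOf b ≠ v ∧ (M.σ a = b ∨ M.θ a = b)) d d'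

/-- A map is 2-connected if it has no loops and no cut vertex. -/
def TwoConnected {D : Type} (M : CombMap D) : Prop :=
  (∀ d, ¬ M.IsLoop d) ∧ ∀ v : M.Vertices, M.ConnectedAvoiding v

end CombMap

-- ====== my aux ======
namespace LopspAux

lemma orbit_card_eq {D : Type} [Finite D] (f : Equiv.Perm D) (a : D) :
    Nat.card {d : D // Quotient.mk (permOrbit f) d = Quotient.mk (permOrbit f) a}
      = Function.minimalPeriod f a := by
  have he : ∀ d : D, (Quotient.mk (permOrbit f) d = Quotient.mk (permOrbit f) a)
      ↔ d ∈ MulAction.orbit (Subgroup.zpowers f) a := by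
    intro d
    constructor
    · intro h
      obtain ⟨n, hn⟩ := Quotient.exact h
      exact ⟨⟨f ^ (-n), Subgroup.zpow_mem _ (Subgroup.mem_zpowers f) _⟩, by
        simp only [Equiv.Perm.smul_def, ← hn, ← Equiv.Perm.mul_apply, ← zpow_add]
        simp⟩
    · rintro ⟨⟨g, m, rfl⟩, rfl⟩
      refine Quotient.sound ⟨-m, ?_⟩
      show (f ^ (-m)) ((f ^ m) a) = a
      simp only [← Equiv.Perm.mul_apply, ← zpow_add]
      simp
  have h1 : Nat.card {d : D // Quotient.mk (permOrbit f) d = Quotient.mk (permOrbit f) a}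
      = Nat.card (MulAction.orbit (Subgroup.zpowers f) a) :=
    Nat.card_congr (Equiv.subtypeEquivRight he)
  have h2 := Nat.card_congr (MulAction.orbitZPowersEquiv f a)
  rw [Nat.card_zmod] at h2
  have h3 : Function.minimalPeriod (f • ·) a = Function.minimalPeriod f a := rfl
  rw [h1, h2, h3]

lemma cube_of_card_three {D : Type} [Finite D] (f : Equiv.Perm D) (a : D)
    (h : Nat.card {d : D // Quotient.mk (permOrbit f) d = Quotient.mk (permOrbit f) a} = 3) :
    f (f (f a)) = a := by
  rw [orbit_card_eq] at h
  have := Function.iterate_minimalPeriod (f := (f : D → D)) (x := a)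
  rw [h] at this
  simpa [Function.iterate_succ_apply'] using this

variable {D : Type} (M : CombMap D)

lemma vertexOf_sigma (x : D) : M.vertexOf (M.σ x) = M.vertexOf x :=
  (Quotient.sound (show (permOrbit M.σ).r x (M.σ x) from ⟨1, by simp⟩)).symm

lemma vertexOf_sigma_pow (x : D) (n : ℕ) : M.vertexOf ((M.σ ^ n) x) = M.vertexOf x :=
  (Quotient.sound (show (permOrbit M.σ).r x ((M.σ ^ n) x) from
    ⟨(n : ℤ), by simp [zpow_natCast]⟩)).symm

lemma vertexOf_sigma_inv (x : D) : M.vertexOf (M.σ⁻¹ x) = M.vertexOf x :=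
  (Quotient.sound (show (permOrbit M.σ).r x (M.σ⁻¹ x) from ⟨-1, by simp⟩)).symm

lemma facePerm_apply (x : D) : M.facePerm x = M.θ (M.σ x) := rfl

lemma theta_facePerm (x : D) : M.θ (M.facePerm x) = M.σ x := by
  rw [facePerm_apply, M.θ_invol]

lemma face_cube [Finite D] (htri : M.IsTriangulation) (a : D) :
    M.facePerm (M.facePerm (M.facePerm a)) = a := by
  have h := htri (M.faceOf a)
  exact cube_of_card_three M.facePerm a h

theorem connectedAvoiding [Finite D]
    (hloop : ∀ d, ¬ M.IsLoop d) (hconn : M.IsConnected) (htri : M.IsTriangulation)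
    (v : M.Vertices) : M.ConnectedAvoiding v := by
  classical
  intro d d' hd hd'
  set R : D → D → Prop :=
    fun a b => M.vertexOf a ≠ v ∧ M.vertexOf b ≠ v ∧ (M.σ a = b ∨ M.θ a = b) with hR
  -- θ of a dart at v is not at v
  have hθv : ∀ x : D, M.vertexOf x = v → M.vertexOf (M.θ x) ≠ v := by
    intro x hx h
    exact hloop x (show M.vertexOf x = M.vertexOf (M.θ x) by rw [hx, h])
  -- σ-moves stay at the same vertex and are reachable
  have hpow : ∀ x : D, M.vertexOf x ≠ v → ∀ n : ℕ,
      Relation.ReflTransGen R x ((M.σ ^ n) x) := by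
    intro x hx n
    induction n with
    | zero => simpa using Relation.ReflTransGen.refl
    | succ n ih =>
      refine ih.tail ⟨by rw [vertexOf_sigma_pow]; exact hx,
        by rw [vertexOf_sigma_pow]; exact hx, Or.inl ?_⟩
      rw [pow_succ', Equiv.Perm.mul_apply]
  have hσpow : M.σ ^ (orderOf M.σ - 1) = M.σ⁻¹ := by
    haveI : Fintype D := Fintype.ofFinite D
    have h1 : 0 < orderOf M.σ := orderOf_pos M.σ
    refine eq_inv_of_mul_eq_one_left ?_
    rw [← pow_succ, Nat.sub_add_cancel h1, pow_orderOf_eq_one]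
  have hinvstep : ∀ x : D, M.vertexOf x ≠ v →
      Relation.ReflTransGen R x (M.σ⁻¹ x) := by
    intro x hx
    have := hpow x hx (orderOf M.σ - 1)
    rwa [hσpow] at this
  -- the corner lemma: going around a corner of v inside a triangle
  have hcorner : ∀ a : D, M.vertexOf a = v →
      Relation.ReflTransGen R (M.θ a) (M.θ (M.σ a)) := by
    intro a ha
    set φ := M.facePerm with hφ
    have h3 : φ (φ (φ a)) = a := face_cube M htri a
    have key : M.σ (φ (φ a)) = M.θ a := by
      have := congrArg M.θ h3
      rwa [theta_facePerm] at this
    have key2 : φ (φ a) = M.σ⁻¹ (M.θ a) := by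
      rw [← key, Equiv.Perm.coe_inv, Equiv.symm_apply_apply]
    have hθa : M.vertexOf (M.θ a) ≠ v := hθv a ha
    have hσa : M.vertexOf (M.σ a) = v := by rw [vertexOf_sigma]; exact ha
    have hφa : M.vertexOf (φ a) ≠ v := by
      rw [hφ, facePerm_apply]; exact hθv (M.σ a) hσa
    have hφφa : M.vertexOf (φ (φ a)) ≠ v := by
      rw [key2, vertexOf_sigma_inv]; exact hθa
    have hσφa : M.vertexOf (M.σ (φ a)) ≠ v := by rw [vertexOf_sigma]; exact hφa
    -- path: θ a ⟶* σ⁻¹(θ a) = φ(φ a) ⟶θ θ(φ(φ a)) = σ(φ a) ⟶* σ⁻¹(σ(φ a)) = φ a = θ(σ a)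
    have p1 : Relation.ReflTransGen R (M.θ a) (φ (φ a)) := by
      rw [key2]; exact hinvstep _ hθa
    have p2 : R (φ (φ a)) (M.σ (φ a)) :=
      ⟨hφφa, hσφa, Or.inr (by rw [theta_facePerm])⟩
    have p3 : Relation.ReflTransGen R (M.σ (φ a)) (φ a) := by
      have := hinvstep (M.σ (φ a)) hσφa
      rwa [Equiv.Perm.coe_inv, Equiv.symm_apply_apply] at this
    have : Relation.ReflTransGen R (M.θ a) (φ a) := (p1.tail p2).trans p3
    rwa [hφ, facePerm_apply] at this
  -- representative of a dart avoiding v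
  set rep : D → D := fun x => if M.vertexOf x = v then M.θ x else x with hrep
  have hrep_eq : ∀ x : D, M.vertexOf x ≠ v → rep x = x := by
    intro x hx; simp [hrep, hx]
  have hstep : ∀ a b : D, (M.σ a = b ∨ M.θ a = b) →
      Relation.ReflTransGen R (rep a) (rep b) := by
    intro a b hab
    by_cases ha : M.vertexOf a = v
    · rcases hab with rfl | rfl
      · have hb : M.vertexOf (M.σ a) = v := by rw [vertexOf_sigma]; exact ha
        simp only [hrep, if_pos ha, if_pos hb]
        exact hcorner a ha
      · have hb : M.vertexOf (M.θ a) ≠ v := hθv a ha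
        simp only [hrep, if_pos ha, if_neg hb]
        exact Relation.ReflTransGen.refl
    · by_cases hb : M.vertexOf b = v
      · rcases hab with rfl | rfl
        · exact absurd (by rwa [vertexOf_sigma] at hb) ha
        · simp only [hrep, if_neg ha, if_pos hb, M.θ_invol]
          exact Relation.ReflTransGen.refl
      · simp only [hrep, if_neg ha, if_neg hb]
        exact Relation.ReflTransGen.single ⟨ha, hb, hab⟩
  have main : ∀ x y : D, Relation.ReflTransGen (fun a b => M.σ a = b ∨ M.θ a = b) x y →
      Relation.ReflTransGen R (rep x) (rep y) := by
    intro x y h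
    induction h with
    | refl => exact Relation.ReflTransGen.refl
    | tail _ h2 ih => exact ih.trans (hstep _ _ h2)
  have := main d d' (hconn d d')
  rwa [hrep_eq d hd, hrep_eq d' hd'] at this

end LopspAux

/-- Every lopsp-operation is 2-connected as a map. -/
theorem lopsp_two_connected {D : Type} [Finite D] (O : Lopsp D) :
    O.M.TwoConnected := by
  have hloop : ∀ d, ¬ O.M.IsLoop d := fun d h => O.proper d (congrArg O.col h)
  exact ⟨hloop, fun v => LopspAux.connectedAvoiding O.M hloop O.conn O.tri v⟩
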